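/- Let P(s,t) = ∑_{k=0}^d c_k s^k t^{d-k} be a homogeneous polynomial of degree d in ℂ[s,t], and define the SL(2,ℂ) action (σ̃_N P)(s,t) = P(Nᵀ(s,t)). Then there exists a one-parameter algebraic subgroup λ ↦ N_λ of SL(2,ℂ) with lim_{λ→0} σ̃_{N_λ} P = 0 (coefficientwise) if and only if P has a linear factor over ℂ of multiplicity strictly greater than d/2. -/

import Mathlib

open MvPolynomial

/-- The action of a `2×2` matrix `N` on binary forms: `(σ̃_N P)(s,t) = P(Nᵀ(s,t))`. -/
noncomputable def sigmaTilde (N : Matrix (Fin 2) (Fin 2) ℂ)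
    (P : MvPolynomial (Fin 2) ℂ) : MvPolynomial (Fin 2) ℂ :=
  aeval (fun i : Fin 2 => C (N 0 i) * X 0 + C (N 1 i) * X 1) P

/-- The one-parameter algebraic subgroup `λ ↦ G diag(λ^a, λ^{-a}) G⁻¹` of `SL(2,ℂ)`. -/
noncomputable def oneParam (G : Matrix (Fin 2) (Fin 2) ℂ) (a : ℤ) (l : ℂ) :
    Matrix (Fin 2) (Fin 2) ℂ :=
  G * Matrix.diagonal ![l ^ a, l ^ (-a)] * G⁻¹

lemma sigmaTilde_isHomogeneous {d : ℕ} {P : MvPolynomial (Fin 2) ℂ} (hP : P.IsHomogeneous d)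
    (N : Matrix (Fin 2) (Fin 2) ℂ) : (sigmaTilde N P).IsHomogeneous d := by
  have := hP.aeval
    (g := fun i : Fin 2 => (C (N 0 i) * X 0 + C (N 1 i) * X 1 : MvPolynomial (Fin 2) ℂ)) (n := 1)
    (fun i => ((isHomogeneous_C _ (N 0 i)).mul (isHomogeneous_X _ _)).add
      ((isHomogeneous_C _ (N 1 i)).mul (isHomogeneous_X _ _)))
  simpa [sigmaTilde] using this

lemma sigmaTilde_sigmaTilde (N M : Matrix (Fin 2) (Fin 2) ℂ) (P : MvPolynomial (Fin 2) ℂ) :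
    sigmaTilde N (sigmaTilde M P) = sigmaTilde (N * M) P := by
  unfold sigmaTilde
  rw [show (aeval fun i : Fin 2 => C (N 0 i) * X 0 + C (N 1 i) * X 1 : MvPolynomial (Fin 2) ℂ →ₐ[ℂ] MvPolynomial (Fin 2) ℂ)
      (aeval (fun i : Fin 2 => C (M 0 i) * X 0 + C (M 1 i) * X 1) P)
    = ((aeval fun i : Fin 2 => C (N 0 i) * X 0 + C (N 1 i) * X 1).comp
        (aeval (fun i : Fin 2 => C (M 0 i) * X 0 + C (M 1 i) * X 1))) P from rfl,
    comp_aeval]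
  have : (fun i : Fin 2 => (aeval fun j : Fin 2 => (C (N 0 j) * X 0 + C (N 1 j) * X 1 : MvPolynomial (Fin 2) ℂ))
        (C (M 0 i) * X 0 + C (M 1 i) * X 1))
      = fun i : Fin 2 => (C ((N * M) 0 i) * X 0 + C ((N * M) 1 i) * X 1 : MvPolynomial (Fin 2) ℂ) := by
    funext i
    simp [Matrix.mul_apply, Fin.sum_univ_two]
    ring
  rw [this]

lemma sigmaTilde_one (P : MvPolynomial (Fin 2) ℂ) : sigmaTilde 1 P = P := by
  unfold sigmaTilde
  have : (fun i : Fin 2 => (C ((1 : Matrix (Fin 2) (Fin 2) ℂ) 0 i) * X 0 + C ((1 : Matrix (Fin 2) (Fin 2) ℂ) 1 i) * X 1 : MvPolynomial (Fin 2) ℂ)) = X := by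
    funext i
    fin_cases i <;> simp [Matrix.one_apply]
  rw [this]
  simp [aeval_X_left]

noncomputable def mk2 (k l : ℕ) : Fin 2 →₀ ℕ := Finsupp.single 0 k + Finsupp.single 1 l

@[simp] lemma mk2_zero (k l : ℕ) : mk2 k l 0 = k := by simp [mk2]
@[simp] lemma mk2_one (k l : ℕ) : mk2 k l 1 = l := by simp [mk2, Finsupp.single_apply]

lemma eq_mk2 (n : Fin 2 →₀ ℕ) : n = mk2 (n 0) (n 1) := by
  ext i
  fin_cases i <;> simp [mk2, Finsupp.single_apply]

lemma homog_deg {d : ℕ} {S : MvPolynomial (Fin 2) ℂ} (hS : S.IsHomogeneous d)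
    {n : Fin 2 →₀ ℕ} (hn : S.coeff n ≠ 0) : n 0 + n 1 = d := by
  have h := hS hn
  change (Finsupp.weight (fun _ => 1)) n = d at h
  rw [← Finsupp.degree_eq_weight_one] at h
  rw [← h, Finsupp.degree]
  calc n 0 + n 1 = ∑ i : Fin 2, n i := (Fin.sum_univ_two _).symm
    _ = ∑ i ∈ n.support, n i := (Finset.sum_subset (Finset.subset_univ n.support)
        (fun i _ hi => by simpa using Finsupp.notMem_support_iff.mp hi)).symm

lemma homog_repr {d : ℕ} {S : MvPolynomial (Fin 2) ℂ} (hS : S.IsHomogeneous d) :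
    S = ∑ k ∈ Finset.range (d + 1), monomial (mk2 k (d - k)) (S.coeff (mk2 k (d - k))) := by
  classical
  have hsub : S.support ⊆ (Finset.range (d + 1)).image (fun k => mk2 k (d - k)) := by
    intro n hn
    have hc := MvPolynomial.mem_support_iff.mp hn
    have hd := homog_deg hS hc
    refine Finset.mem_image.mpr ⟨n 0, Finset.mem_range.mpr (by omega), ?_⟩
    rw [show d - n 0 = n 1 by omega]
    exact (eq_mk2 n).symm
  have h1 : ∑ n ∈ (Finset.range (d + 1)).image (fun k => mk2 k (d - k)),
      monomial n (S.coeff n) = S := by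
    conv_rhs => rw [← S.support_sum_monomial_coeff]
    refine (Finset.sum_subset hsub ?_).symm
    intro n _ hn
    rw [MvPolynomial.notMem_support_iff.mp hn, map_zero]
  have hinj : ∀ a ∈ Finset.range (d + 1), ∀ b ∈ Finset.range (d + 1),
      mk2 a (d - a) = mk2 b (d - b) → a = b := by
    intro a _ b _ hab
    have : mk2 a (d - a) 0 = mk2 b (d - b) 0 := by rw [hab]
    simpa using this
  rw [Finset.sum_image hinj] at h1
  exact h1.symm

lemma sigmaTilde_add (N : Matrix (Fin 2) (Fin 2) ℂ) (p q : MvPolynomial (Fin 2) ℂ) :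
    sigmaTilde N (p + q) = sigmaTilde N p + sigmaTilde N q := by
  simp [sigmaTilde, map_add]

lemma sigmaTilde_mul (N : Matrix (Fin 2) (Fin 2) ℂ) (p q : MvPolynomial (Fin 2) ℂ) :
    sigmaTilde N (p * q) = sigmaTilde N p * sigmaTilde N q := by
  simp [sigmaTilde, map_mul]

lemma sigmaTilde_pow (N : Matrix (Fin 2) (Fin 2) ℂ) (p : MvPolynomial (Fin 2) ℂ) (k : ℕ) :
    sigmaTilde N (p ^ k) = sigmaTilde N p ^ k := by
  simp [sigmaTilde, map_pow]

lemma sigmaTilde_monomial (N : Matrix (Fin 2) (Fin 2) ℂ) (n : Fin 2 →₀ ℕ) (c : ℂ) :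
    sigmaTilde N (monomial n c) = C c * sigmaTilde N (monomial n 1) := by
  rw [sigmaTilde, sigmaTilde, aeval_monomial, aeval_monomial]
  simp

lemma coeff_sigmaTilde_diag (x y : ℂ) (Q : MvPolynomial (Fin 2) ℂ) (n : Fin 2 →₀ ℕ) :
    (sigmaTilde (Matrix.diagonal ![x, y]) Q).coeff n = Q.coeff n * x ^ n 0 * y ^ n 1 := by
  have key : ∀ (m : Fin 2 →₀ ℕ) (c : ℂ),
      sigmaTilde (Matrix.diagonal ![x, y]) (monomial m c) = monomial m (c * x ^ m 0 * y ^ m 1) := by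
    intro m c
    rw [sigmaTilde, aeval_monomial,
      Finsupp.prod_fintype _ _ (fun i => pow_zero _), Fin.prod_univ_two]
    rw [monomial_eq, Finsupp.prod_fintype _ _ (fun i => pow_zero _), Fin.prod_univ_two]
    have e0 : ((Matrix.diagonal ![x, y]) : Matrix (Fin 2) (Fin 2) ℂ) 0 0 = x := by simp
    have e1 : ((Matrix.diagonal ![x, y]) : Matrix (Fin 2) (Fin 2) ℂ) 1 0 = 0 := by
      simp [Matrix.diagonal_apply_ne]
    have e2 : ((Matrix.diagonal ![x, y]) : Matrix (Fin 2) (Fin 2) ℂ) 0 1 = 0 := by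
      simp [Matrix.diagonal_apply_ne]
    have e3 : ((Matrix.diagonal ![x, y]) : Matrix (Fin 2) (Fin 2) ℂ) 1 1 = y := by simp
    rw [e0, e1, e2, e3]
    simp only [map_zero, zero_mul, add_zero, zero_add, mul_pow, map_mul, map_pow, algebraMap_eq]
    ring
  induction Q using MvPolynomial.induction_on' with
  | monomial m c => rw [key]; simp [coeff_monomial]; split_ifs with h; · subst h; ring
                    · ring
  | add p q hp hq => rw [sigmaTilde_add, MvPolynomial.coeff_add, hp, hq, MvPolynomial.coeff_add]; ring

lemma coeff_sigmaTilde_homog {d : ℕ} {S : MvPolynomial (Fin 2) ℂ} (hS : S.IsHomogeneous d)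
    (H : Matrix (Fin 2) (Fin 2) ℂ) (m : Fin 2 →₀ ℕ) :
    (sigmaTilde H S).coeff m = ∑ k ∈ Finset.range (d + 1),
      S.coeff (mk2 k (d - k)) * (sigmaTilde H (monomial (mk2 k (d - k)) 1)).coeff m := by
  conv_lhs => rw [homog_repr hS]
  rw [show sigmaTilde H (∑ k ∈ Finset.range (d + 1),
        monomial (mk2 k (d - k)) (S.coeff (mk2 k (d - k))))
      = ∑ k ∈ Finset.range (d + 1),
        sigmaTilde H (monomial (mk2 k (d - k)) (S.coeff (mk2 k (d - k)))) from
    map_sum (aeval _) _ _]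
  rw [MvPolynomial.coeff_sum]
  refine Finset.sum_congr rfl fun k _ => ?_
  rw [sigmaTilde_monomial, MvPolynomial.coeff_C_mul]

lemma X_pow_dvd_of_support {Q : MvPolynomial (Fin 2) ℂ} {i : Fin 2} {t : ℕ}
    (h : ∀ n ∈ Q.support, t ≤ n i) : (X i : MvPolynomial (Fin 2) ℂ) ^ t ∣ Q := by
  classical
  refine ⟨∑ n ∈ Q.support, monomial (n - Finsupp.single i t) (Q.coeff n), ?_⟩
  conv_lhs => rw [← Q.support_sum_monomial_coeff]
  rw [Finset.mul_sum]
  refine Finset.sum_congr rfl fun n hn => ?_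
  rw [X_pow_eq_monomial, monomial_mul, one_mul]
  have ht := h n hn
  have heq : Finsupp.single i t + (n - Finsupp.single i t) = n := by
    ext j
    rcases eq_or_ne j i with hj | hj
    · subst hj
      simp only [Finsupp.add_apply, Finsupp.tsub_apply, Finsupp.single_apply]
      simp only [if_true, eq_self_iff_true]
      omega
    · simp [Finsupp.single_apply, Ne.symm hj]
  rw [heq]

lemma support_of_X_pow_dvd {Q : MvPolynomial (Fin 2) ℂ} {i : Fin 2} {t : ℕ}
    (h : (X i : MvPolynomial (Fin 2) ℂ) ^ t ∣ Q) : ∀ n ∈ Q.support, t ≤ n i := by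
  classical
  obtain ⟨R, rfl⟩ := h
  intro n hn
  have hc := MvPolynomial.mem_support_iff.mp hn
  rw [X_pow_eq_monomial, MvPolynomial.coeff_monomial_mul'] at hc
  by_contra hlt
  apply hc
  rw [if_neg]
  intro hle
  exact hlt (by simpa using hle i)

open Filter in
lemma tendsto_c_zpow {e : ℤ} (he : 0 < e) (c : ℂ) :
    Tendsto (fun l : ℂ => c * l ^ e) (nhdsWithin 0 {(0 : ℂ)}ᶜ) (nhds 0) := by
  obtain ⟨k, rfl⟩ : ∃ k : ℕ, e = (k : ℤ) := ⟨e.toNat, (Int.toNat_of_nonneg he.le).symm⟩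
  have hk : k ≠ 0 := by exact_mod_cast he.ne'
  have h1 : Tendsto (fun l : ℂ => c * l ^ k) (nhds 0) (nhds 0) := by
    have hcont : Continuous (fun l : ℂ => c * l ^ k) := continuous_const.mul (continuous_pow k)
    have := hcont.tendsto (0 : ℂ)
    simpa [zero_pow hk] using this
  exact (h1.mono_left nhdsWithin_le_nhds).congr fun l => by rw [zpow_natCast]

open Filter in
lemma pos_of_tendsto_zpow {c : ℂ} (hc : c ≠ 0) {e : ℤ}
    (h : Tendsto (fun l : ℂ => c * l ^ e) (nhdsWithin 0 {(0 : ℂ)}ᶜ) (nhds 0)) : 0 < e := by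
  by_contra hle
  push_neg at hle
  have h1 : ∀ᶠ l : ℂ in nhdsWithin 0 {(0 : ℂ)}ᶜ, ‖c * l ^ e‖ < ‖c‖ := by
    have := Metric.tendsto_nhds.mp h ‖c‖ (norm_pos_iff.mpr hc)
    simpa [dist_zero_right] using this
  have h2 : ∀ᶠ l : ℂ in nhdsWithin 0 {(0 : ℂ)}ᶜ, l ∈ ({(0 : ℂ)}ᶜ : Set ℂ) :=
    self_mem_nhdsWithin
  have h3 : ∀ᶠ l : ℂ in nhdsWithin 0 {(0 : ℂ)}ᶜ, ‖l‖ < 1 := by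
    refine Filter.Eventually.filter_mono nhdsWithin_le_nhds ?_
    have hb := Metric.ball_mem_nhds (0 : ℂ) one_pos
    refine Filter.eventually_of_mem hb fun l hl => ?_
    simpa [dist_zero_right] using hl
  obtain ⟨l, hl1, hl2, hl3⟩ := (h1.and (h2.and h3)).exists
  have hl0 : (0 : ℝ) < ‖l‖ := norm_pos_iff.mpr (by simpa using hl2)
  have hone : (1 : ℝ) ≤ ‖l‖ ^ e := by
    exact one_le_zpow_of_nonpos₀ hl0 hl3.le hle
  have : ‖c‖ ≤ ‖c * l ^ e‖ := by
    rw [norm_mul, norm_zpow]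
    nlinarith [norm_pos_iff.mpr hc]
  linarith

lemma sigmaTilde_X (N : Matrix (Fin 2) (Fin 2) ℂ) (i : Fin 2) :
    sigmaTilde N (X i) = C (N 0 i) * X 0 + C (N 1 i) * X 1 := by
  simp [sigmaTilde]

lemma sigmaTilde_C (N : Matrix (Fin 2) (Fin 2) ℂ) (c : ℂ) :
    sigmaTilde N (C c) = C c := by
  simp [sigmaTilde]

lemma diag_eq_zpow {l : ℂ} (hl : l ≠ 0) (a : ℤ) (cq : ℂ) (n0 n1 : ℕ) :
    cq * (l ^ a) ^ n0 * (l ^ (-a)) ^ n1 = cq * l ^ (a * ((n0 : ℤ) - n1)) := by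
  rw [← zpow_natCast (l ^ a) n0, ← zpow_natCast (l ^ (-a)) n1, ← zpow_mul, ← zpow_mul,
    mul_assoc, ← zpow_add₀ hl]
  ring_nf

open Filter

/-- **Hilbert–Mumford instability of binary forms.** A homogeneous binary form `P` of degree `d`
is destabilised by some one-parameter subgroup of `SL(2,ℂ)` (i.e. `σ̃_{N_λ} P → 0`
coefficientwise as `λ → 0`) if and only if `P` has a linear factor of multiplicity `> d/2`. -/
theorem binary_form_unstable_iff (d : ℕ) (P : MvPolynomial (Fin 2) ℂ)
    (hP : P.IsHomogeneous d) :
    (∃ G : Matrix (Fin 2) (Fin 2) ℂ, G.det = 1 ∧ ∃ a : ℤ,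
      ∀ m : Fin 2 →₀ ℕ,
        Filter.Tendsto (fun l : ℂ => (sigmaTilde (oneParam G a l) P).coeff m)
          (nhdsWithin 0 {(0 : ℂ)}ᶜ) (nhds 0)) ↔
    ∃ u v : ℂ, (u, v) ≠ (0, 0) ∧ ∃ m : ℕ, (d : ℝ) / 2 < (m : ℝ) ∧
      (C u * X 0 + C v * X 1) ^ m ∣ P := by
  constructor
  · rintro ⟨G, hdet, a, h⟩
    have hdet0 : G.det ≠ 0 := by rw [hdet]; exact one_ne_zero
    have hGinv : G⁻¹ * G = 1 := Matrix.nonsing_inv_mul G (isUnit_iff_ne_zero.mpr hdet0)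
    have hGG : G * G⁻¹ = 1 := Matrix.mul_nonsing_inv G (isUnit_iff_ne_zero.mpr hdet0)
    set Q := sigmaTilde G⁻¹ P with hQ
    have hQhom : Q.IsHomogeneous d := sigmaTilde_isHomogeneous hP _
    have hPQ : sigmaTilde G Q = P := by
      rw [hQ, sigmaTilde_sigmaTilde, hGG, sigmaTilde_one]
    have hkey : ∀ l : ℂ, sigmaTilde (Matrix.diagonal ![l ^ a, l ^ (-a)]) Q
        = sigmaTilde G⁻¹ (sigmaTilde (oneParam G a l) P) := by
      intro l
      rw [hQ, sigmaTilde_sigmaTilde, sigmaTilde_sigmaTilde, oneParam]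
      congr 1
      rw [← Matrix.mul_assoc, ← Matrix.mul_assoc, hGinv, Matrix.one_mul]
    have hQn : ∀ n : Fin 2 →₀ ℕ,
        Tendsto (fun l : ℂ => (sigmaTilde (Matrix.diagonal ![l ^ a, l ^ (-a)]) Q).coeff n)
          (nhdsWithin 0 {(0 : ℂ)}ᶜ) (nhds 0) := by
      intro n
      have heq : ∀ l : ℂ, (sigmaTilde (Matrix.diagonal ![l ^ a, l ^ (-a)]) Q).coeff n
          = ∑ k ∈ Finset.range (d + 1), (sigmaTilde (oneParam G a l) P).coeff (mk2 k (d - k))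
              * (sigmaTilde G⁻¹ (monomial (mk2 k (d - k)) 1)).coeff n := by
        intro l
        rw [hkey l, coeff_sigmaTilde_homog (sigmaTilde_isHomogeneous hP _) G⁻¹ n]
      have hsum : Tendsto (fun l : ℂ => ∑ k ∈ Finset.range (d + 1),
          (sigmaTilde (oneParam G a l) P).coeff (mk2 k (d - k))
            * (sigmaTilde G⁻¹ (monomial (mk2 k (d - k)) 1)).coeff n)
          (nhdsWithin 0 {(0 : ℂ)}ᶜ) (nhds 0) := by
        have := tendsto_finset_sum (Finset.range (d + 1))
          (fun k _ => (h (mk2 k (d - k))).mul_const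
            ((sigmaTilde G⁻¹ (monomial (mk2 k (d - k)) 1)).coeff n))
        simpa using this
      exact hsum.congr fun l => (heq l).symm
    have hpos : ∀ n ∈ Q.support, 0 < a * ((n 0 : ℤ) - n 1) := by
      intro n hn
      have hc : Q.coeff n ≠ 0 := MvPolynomial.mem_support_iff.mp hn
      refine pos_of_tendsto_zpow hc ?_
      refine ((hQn n).congr' ?_)
      filter_upwards [self_mem_nhdsWithin] with l hl
      rw [coeff_sigmaTilde_diag, diag_eq_zpow (by simpa using hl)]
    rcases lt_trichotomy a 0 with ha | ha | ha
    · -- a < 0 : X 1 factor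
      set t := d / 2 + 1 with htdef
      have hsup : ∀ n ∈ Q.support, t ≤ n 1 := by
        intro n hn
        have h1 := hpos n hn
        have h2 := homog_deg hQhom (MvPolynomial.mem_support_iff.mp hn)
        have h3 : ((n 0 : ℤ) - n 1) < 0 := by nlinarith
        omega
      obtain ⟨R, hRQ⟩ := X_pow_dvd_of_support hsup
      refine ⟨G 0 1, G 1 1, ?_, t, ?_, ?_⟩
      · intro hc
        rw [Prod.mk.injEq] at hc
        rw [Matrix.det_fin_two, hc.1, hc.2] at hdet
        simp at hdet
      · have hd2 : d < 2 * (d / 2 + 1) := by omega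
        have : (d : ℝ) < 2 * ((d / 2 : ℕ) + 1) := by exact_mod_cast hd2
        rw [htdef]
        push_cast
        linarith
      · refine ⟨sigmaTilde G R, ?_⟩
        rw [← hPQ, hRQ, sigmaTilde_mul, sigmaTilde_pow, sigmaTilde_X]
    · -- a = 0 : P = 0
      have hsupp : Q.support = ∅ := by
        rw [Finset.eq_empty_iff_forall_notMem]
        intro n hn
        have := hpos n hn
        rw [ha] at this
        simp at this
      have hQ0 : Q = 0 := MvPolynomial.support_eq_empty.mp hsupp
      have hP0 : P = 0 := by
        rw [← hPQ, hQ0, sigmaTilde]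
        simp
      refine ⟨1, 0, by simp, d + 1, ?_, by rw [hP0]; exact dvd_zero _⟩
      have : (0 : ℝ) ≤ (d : ℝ) := Nat.cast_nonneg d
      push_cast
      linarith
    · -- a > 0 : X 0 factor
      set t := d / 2 + 1 with htdef
      have hsup : ∀ n ∈ Q.support, t ≤ n 0 := by
        intro n hn
        have h1 := hpos n hn
        have h2 := homog_deg hQhom (MvPolynomial.mem_support_iff.mp hn)
        have h3 : (0 : ℤ) < ((n 0 : ℤ) - n 1) := by nlinarith
        omega
      obtain ⟨R, hRQ⟩ := X_pow_dvd_of_support hsup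
      refine ⟨G 0 0, G 1 0, ?_, t, ?_, ?_⟩
      · intro hc
        rw [Prod.mk.injEq] at hc
        rw [Matrix.det_fin_two, hc.1, hc.2] at hdet
        simp at hdet
      · have hd2 : d < 2 * (d / 2 + 1) := by omega
        have : (d : ℝ) < 2 * ((d / 2 : ℕ) + 1) := by exact_mod_cast hd2
        rw [htdef]
        push_cast
        linarith
      · refine ⟨sigmaTilde G R, ?_⟩
        rw [← hPQ, hRQ, sigmaTilde_mul, sigmaTilde_pow, sigmaTilde_X]
  · rintro ⟨u, v, huv, m, hm, R, hR⟩
    obtain ⟨H, hHdet, hHL⟩ : ∃ H : Matrix (Fin 2) (Fin 2) ℂ, H.det = 1 ∧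
        sigmaTilde H (C u * X 0 + C v * X 1) = X 0 := by
      rcases eq_or_ne u 0 with hu | hu
      · have hv : v ≠ 0 := by
          rintro rfl
          exact huv (by simp [hu])
        refine ⟨Matrix.of ![![0, v⁻¹], ![-v, 0]], ?_, ?_⟩
        · rw [Matrix.det_fin_two]
          simp [mul_inv_cancel₀ hv, inv_mul_cancel₀ hv]
        · rw [sigmaTilde_add, sigmaTilde_mul, sigmaTilde_mul, sigmaTilde_C, sigmaTilde_C,
            sigmaTilde_X, sigmaTilde_X]
          simp [hu]
          have hcv : (C v : MvPolynomial (Fin 2) ℂ) * C v⁻¹ = 1 := by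
            rw [← C_mul, mul_inv_cancel₀ hv, C_1]
          linear_combination (X 0 : MvPolynomial (Fin 2) ℂ) * hcv
      · refine ⟨Matrix.of ![![u⁻¹, 0], ![-v, u]], ?_, ?_⟩
        · rw [Matrix.det_fin_two]
          simp [inv_mul_cancel₀ hu]
        · rw [sigmaTilde_add, sigmaTilde_mul, sigmaTilde_mul, sigmaTilde_C, sigmaTilde_C,
            sigmaTilde_X, sigmaTilde_X]
          simp
          have hcu : (C u : MvPolynomial (Fin 2) ℂ) * C u⁻¹ = 1 := by
            rw [← C_mul, mul_inv_cancel₀ hu, C_1]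
          linear_combination (X 0 : MvPolynomial (Fin 2) ℂ) * hcu
    have hHdet0 : H.det ≠ 0 := by rw [hHdet]; exact one_ne_zero
    set G := H⁻¹ with hGdef
    have hGdet : G.det = 1 := by
      rw [hGdef, Matrix.det_nonsing_inv, hHdet]
      simp
    have hGinv : G⁻¹ = H := Matrix.nonsing_inv_nonsing_inv H (isUnit_iff_ne_zero.mpr hHdet0)
    set Q := sigmaTilde H P with hQdef
    have hQhom : Q.IsHomogeneous d := sigmaTilde_isHomogeneous hP _
    have hQdvd : (X 0 : MvPolynomial (Fin 2) ℂ) ^ m ∣ Q := by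
      refine ⟨sigmaTilde H R, ?_⟩
      rw [hQdef, hR, sigmaTilde_mul, sigmaTilde_pow, hHL]
    have hsupp : ∀ n ∈ Q.support, m ≤ n 0 := support_of_X_pow_dvd hQdvd
    have hdm : d < 2 * m := by
      by_contra hc
      push_neg at hc
      have : (2 * m : ℝ) ≤ (d : ℝ) := by exact_mod_cast hc
      linarith
    refine ⟨G, hGdet, 1, fun mm => ?_⟩
    have hexp : ∀ l : ℂ, (sigmaTilde (oneParam G 1 l) P).coeff mm
        = ∑ k ∈ Finset.range (d + 1),
            (sigmaTilde (Matrix.diagonal ![l ^ (1 : ℤ), l ^ (-(1 : ℤ))]) Q).coeff (mk2 k (d - k))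
              * (sigmaTilde G (monomial (mk2 k (d - k)) 1)).coeff mm := by
      intro l
      have h1 : sigmaTilde (oneParam G 1 l) P
          = sigmaTilde G (sigmaTilde (Matrix.diagonal ![l ^ (1 : ℤ), l ^ (-(1 : ℤ))]) Q) := by
        rw [oneParam, Matrix.mul_assoc, ← sigmaTilde_sigmaTilde, ← sigmaTilde_sigmaTilde,
          hGinv, ← hQdef]
      rw [h1, coeff_sigmaTilde_homog (sigmaTilde_isHomogeneous hQhom _) G mm]
    have hterm : ∀ k ∈ Finset.range (d + 1),
        Tendsto (fun l : ℂ =>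
            (sigmaTilde (Matrix.diagonal ![l ^ (1 : ℤ), l ^ (-(1 : ℤ))]) Q).coeff (mk2 k (d - k))
              * (sigmaTilde G (monomial (mk2 k (d - k)) 1)).coeff mm)
          (nhdsWithin 0 {(0 : ℂ)}ᶜ) (nhds 0) := by
      intro k hk
      rcases eq_or_ne (Q.coeff (mk2 k (d - k))) 0 with hc | hc
      · have : (fun l : ℂ =>
            (sigmaTilde (Matrix.diagonal ![l ^ (1 : ℤ), l ^ (-(1 : ℤ))]) Q).coeff (mk2 k (d - k))
              * (sigmaTilde G (monomial (mk2 k (d - k)) 1)).coeff mm) = fun _ => 0 := by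
          funext l
          rw [coeff_sigmaTilde_diag, hc]
          ring
        rw [this]
        exact tendsto_const_nhds
      · have hmem : mk2 k (d - k) ∈ Q.support := MvPolynomial.mem_support_iff.mpr hc
        have hk0 : m ≤ k := by simpa using hsupp _ hmem
        have hkd : k ≤ d := Nat.lt_succ_iff.mp (Finset.mem_range.mp hk)
        have he : (0 : ℤ) < 1 * ((k : ℤ) - ((d - k : ℕ) : ℤ)) := by
          rw [Nat.cast_sub hkd]
          omega
        have htz := (tendsto_c_zpow he (Q.coeff (mk2 k (d - k)))).mul_const
          ((sigmaTilde G (monomial (mk2 k (d - k)) 1)).coeff mm)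
        rw [zero_mul] at htz
        refine htz.congr' ?_
        filter_upwards [self_mem_nhdsWithin] with l hl
        rw [coeff_sigmaTilde_diag]
        congr 1
        rw [diag_eq_zpow (by simpa using hl)]
        simp
    have hsum := tendsto_finset_sum (Finset.range (d + 1)) hterm
    rw [Finset.sum_const_zero] at hsum
    exact hsum.congr fun l => (hexp l).symm
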